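/- arXiv:1308.4822 — 2 statements merged into one kernel-verified Lean document; each statement's English description precedes it below -/
import Mathlib

section
/- Let L be a bounded lattice and Y = D̄♭(L) = (SPH(L,2_B), E). Then the complete lattice C(Y) = MPE(Y,2), ordered by φ ≤ ψ iff φ⁻¹(1) ⊆ ψ⁻¹(1), together with the embedding a ↦ ē_a, is a canonical extension of L: a completion of L that is both dense and compact. -/
namespace CanExt

open Classical

/-- A partial map from `X` into the two-element chain `{0,1}` (encoded as `Bool`,
with `false` playing the role of `0` and `true` the role of `1`);
`φ x = none` means `x` is outside the domain of `φ`. -/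
abbrev PMap (X : Type*) := X → Option Bool

/-- The preimage of `1` of a partial map. -/
def pre1 {X : Type*} (φ : PMap X) : Set X := {x | φ x = some true}

/-- The preimage of `0` of a partial map. -/
def pre0 {X : Type*} (φ : PMap X) : Set X := {x | φ x = some false}

/-- A partial map is `E`-preserving if whenever `x, y` lie in its domain and
`(x,y) ∈ E`, then `φ x ≤ φ y`. -/
def EPres {X : Type*} (E : X → X → Prop) (φ : PMap X) : Prop :=
  ∀ ⦃x y : X⦄, E x y → ∀ ⦃a b : Bool⦄, φ x = some a → φ y = some b → a ≤ b

/-- `PExt ψ φ` : the partial map `ψ` extends the partial map `φ`. -/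
def PExt {X : Type*} (ψ φ : PMap X) : Prop :=
  ∀ ⦃x : X⦄ ⦃a : Bool⦄, φ x = some a → ψ x = some a

/-- The set of maximal partial `E`-preserving maps from `(X,E)` into the
two-element chain `2`. -/
def MPE {X : Type*} (E : X → X → Prop) : Set (PMap X) :=
  {φ | EPres E φ ∧ ∀ ψ : PMap X, EPres E ψ → PExt ψ φ → ψ = φ}

/-- A partial morphism from a graph with topology `(X,E,t)` to `2_τ`:
the preimages of `1` and `0` are `t`-closed (equivalently, the domain is
closed and the restriction to the domain is continuous into discrete `2`),
and the map is `E`-preserving. -/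
def PMorphT {X : Type*} (E : X → X → Prop) (t : TopologicalSpace X) (φ : PMap X) : Prop :=
  EPres E φ ∧ @IsClosed X t (pre1 φ) ∧ @IsClosed X t (pre0 φ)

/-- The set of maximal partial morphisms from `(X,E,t)` to `2_τ`. -/
def MPM {X : Type*} (E : X → X → Prop) (t : TopologicalSpace X) : Set (PMap X) :=
  {φ | PMorphT E t φ ∧ ∀ ψ : PMap X, PMorphT E t ψ → PExt ψ φ → ψ = φ}

/-- The relation `E` between partial maps on a lattice `L`:
`(f,g) ∈ E` iff `f x ≤ g x` for all `x ∈ dom f ∩ dom g`. -/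
def ErelP {L : Type*} (f g : PMap L) : Prop :=
  ∀ ⦃x : L⦄ ⦃a b : Bool⦄, f x = some a → g x = some b → a ≤ b

/-- `f ≤₁ g` iff `f⁻¹(1) ⊆ g⁻¹(1)`. -/
def le1 {L : Type*} (f g : PMap L) : Prop := pre1 f ⊆ pre1 g

/-- `f ≤₂ g` iff `f⁻¹(0) ⊆ g⁻¹(0)`. -/
def le2 {L : Type*} (f g : PMap L) : Prop := pre0 f ⊆ pre0 g

section Lat

variable (L : Type*) [Lattice L] [BoundedOrder L]

/-- A partial homomorphism from a bounded lattice `L` to the two-element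
bounded lattice `2_B`: its domain is a `{0,1}`-sublattice of `L` and the
restriction to the domain is a bounded-lattice homomorphism. -/
def PHom (f : PMap L) : Prop :=
  f ⊥ = some false ∧ f ⊤ = some true ∧
  ∀ ⦃a b : L⦄ ⦃x y : Bool⦄, f a = some x → f b = some y →
    f (a ⊓ b) = some (x ⊓ y) ∧ f (a ⊔ b) = some (x ⊔ y)

/-- The set of maximal partial homomorphisms (MPHs) from `L` to `2_B`. -/
def MPHset : Set (PMap L) := {f | PHom L f ∧ ∀ g : PMap L, PHom L g → PExt g f → g = f}

/-- The underlying set of the graph `D♭(L)`. -/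
abbrev MPHsub := {f : PMap L // f ∈ MPHset L}

/-- The relation `E` on `MPH(L, 2_B)`, giving the graph `D♭(L)`. -/
def EM (f g : MPHsub L) : Prop := ErelP f.1 g.1

/-- The evaluation map `e_a` on `MPH(L,2_B)` : `e_a(f) = f(a)` if `a ∈ dom f`. -/
def evalM (a : L) : PMap (MPHsub L) := fun f => f.1 a

/-- `V_a = {f ∈ MPH(L,2_B) : f(a) = 0}`. -/
def VaM (a : L) : Set (MPHsub L) := {f | f.1 a = some false}

/-- `W_a = {f ∈ MPH(L,2_B) : f(a) = 1}`. -/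
def WaM (a : L) : Set (MPHsub L) := {f | f.1 a = some true}

/-- The topology on `MPH(L,2_B)` with the sets `V_a`, `W_a` as a subbasis of
closed sets. -/
def tauM : TopologicalSpace (MPHsub L) :=
  TopologicalSpace.generateFrom {U | ∃ a : L, U = (VaM L a)ᶜ ∨ U = (WaM L a)ᶜ}

/-- A (nonempty) lattice filter. -/
def IsLatFilter (F : Set L) : Prop :=
  F.Nonempty ∧ (∀ ⦃a b : L⦄, a ∈ F → a ≤ b → b ∈ F) ∧
    (∀ ⦃a b : L⦄, a ∈ F → b ∈ F → a ⊓ b ∈ F)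

/-- A (nonempty) lattice ideal. -/
def IsLatIdeal (I : Set L) : Prop :=
  I.Nonempty ∧ (∀ ⦃a b : L⦄, a ∈ I → b ≤ a → b ∈ I) ∧
    (∀ ⦃a b : L⦄, a ∈ I → b ∈ I → a ⊔ b ∈ I)

/-- The set of special partial homomorphisms (SPHs) from `L` to `2_B`:
`f⁻¹(1)` is a nonempty filter, `f⁻¹(0)` is a nonempty ideal, and they are
disjoint. -/
def SPHset : Set (PMap L) :=
  {f | IsLatFilter L (pre1 f) ∧ IsLatIdeal L (pre0 f) ∧ Disjoint (pre1 f) (pre0 f)}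

/-- The underlying set of the graph `D̄♭(L)`. -/
abbrev SPHsub := {f : PMap L // f ∈ SPHset L}

/-- The relation `E` on `SPH(L, 2_B)`, giving the graph `D̄♭(L)`. -/
def ES (f g : SPHsub L) : Prop := ErelP f.1 g.1

/-- The evaluation map `ē_a` on `SPH(L,2_B)`. -/
def evalS (a : L) : PMap (SPHsub L) := fun f => f.1 a

/-- `V_a = {f ∈ SPH(L,2_B) : f(a) = 0}`. -/
def VaS (a : L) : Set (SPHsub L) := {f | f.1 a = some false}

/-- `W_a = {f ∈ SPH(L,2_B) : f(a) = 1}`. -/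
def WaS (a : L) : Set (SPHsub L) := {f | f.1 a = some true}

/-- The topology on `SPH(L,2_B)` with the sets `V_a`, `W_a` as a subbasis of
closed sets. -/
def tauS : TopologicalSpace (SPHsub L) :=
  TopologicalSpace.generateFrom {U | ∃ a : L, U = (VaS L a)ᶜ ∨ U = (WaS L a)ᶜ}

/-- The carrier of the completion built from `D♭(L)`. -/
abbrev CX := {φ : PMap (MPHsub L) // φ ∈ MPE (EM L)}

/-- The carrier of the completion built from `D̄♭(L)`. -/
abbrev CY := {φ : PMap (SPHsub L) // φ ∈ MPE (ES L)}

end Lat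

section Aux

set_option linter.unusedSectionVars false

open Set

lemma erelP_refl {X : Type*} (f : PMap X) : ErelP f f := by
  intro x a b ha hb
  rw [ha] at hb
  cases hb
  exact le_refl _

lemma not_erelP_iff {X : Type*} {f g : PMap X} :
    ¬ ErelP f g ↔ ∃ x, f x = some true ∧ g x = some false := by
  constructor
  · intro h
    by_contra hc
    push_neg at hc
    apply h
    intro x a b ha hb
    cases a
    · exact Bool.false_le b
    · cases b
      · exact absurd hb (hc x ha)
      · exact le_refl _
  · rintro ⟨x, hfx, hgx⟩ h
    exact absurd (h hfx hgx) (by decide)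

variable {L : Type*} [Lattice L] [BoundedOrder L]

lemma sph_up (f : SPHsub L) {a b : L} (h : f.1 a = some true) (hab : a ≤ b) :
    f.1 b = some true := f.2.1.2.1 h hab

lemma sph_inf1 (f : SPHsub L) {a b : L} (ha : f.1 a = some true) (hb : f.1 b = some true) :
    f.1 (a ⊓ b) = some true := f.2.1.2.2 ha hb

lemma sph_down (f : SPHsub L) {a b : L} (h : f.1 a = some false) (hba : b ≤ a) :
    f.1 b = some false := f.2.2.1.2.1 h hba

lemma sph_sup0 (f : SPHsub L) {a b : L} (ha : f.1 a = some false) (hb : f.1 b = some false) :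
    f.1 (a ⊔ b) = some false := f.2.2.1.2.2 ha hb

lemma sph_top (f : SPHsub L) : f.1 ⊤ = some true := by
  obtain ⟨a, ha⟩ := f.2.1.1
  exact sph_up f ha le_top

lemma sph_bot (f : SPHsub L) : f.1 ⊥ = some false := by
  obtain ⟨a, ha⟩ := f.2.2.1.1
  exact sph_down f ha bot_le

lemma sph_finset_inf (f : SPHsub L) (T : Finset L) (h : ∀ a ∈ T, f.1 a = some true) :
    f.1 (T.inf id) = some true := by
  classical
  induction T using Finset.induction_on with
  | empty => simpa using sph_top f
  | @insert a s ha ih =>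
      rw [Finset.inf_insert]
      exact sph_inf1 f (h _ (Finset.mem_insert_self _ _))
        (ih fun x hx => h x (Finset.mem_insert_of_mem hx))

lemma sph_finset_sup0 (f : SPHsub L) (T : Finset L) (h : ∀ a ∈ T, f.1 a = some false) :
    f.1 (T.sup id) = some false := by
  classical
  induction T using Finset.induction_on with
  | empty => simpa using sph_bot f
  | @insert a s ha ih =>
      rw [Finset.sup_insert]
      exact sph_sup0 f (h _ (Finset.mem_insert_self _ _))
        (ih fun x hx => h x (Finset.mem_insert_of_mem hx))

/-- Glue a filter and an ideal into a partial map. -/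
noncomputable def glue (F I : Set L) : PMap L :=
  fun x => if x ∈ F then some true else if x ∈ I then some false else none

lemma glue_true {F I : Set L} {x : L} : glue F I x = some true ↔ x ∈ F := by
  unfold glue
  split_ifs with h1 h2 <;> simp [*]

lemma glue_false {F I : Set L} {x : L} : glue F I x = some false ↔ (x ∉ F ∧ x ∈ I) := by
  unfold glue
  split_ifs with h1 h2 <;> simp [*]

lemma glue_mem {F I : Set L} (hF : IsLatFilter L F) (hI : IsLatIdeal L I)
    (hd : ∀ x, x ∈ F → x ∈ I → False) : glue F I ∈ SPHset L := by
  have h1 : pre1 (glue F I) = F := Set.ext fun x => glue_true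
  have h0 : pre0 (glue F I) = I := by
    ext x
    show glue F I x = some false ↔ x ∈ I
    rw [glue_false]
    exact ⟨fun h => h.2, fun h => ⟨fun hf => hd x hf h, h⟩⟩
  refine ⟨?_, ?_, ?_⟩
  · rw [h1]; exact hF
  · rw [h0]; exact hI
  rw [h1, h0]
  exact Set.disjoint_left.mpr fun {x} hx hy => hd x hx hy

lemma prin_mem {a : L} (ha : a ≠ ⊥) :
    glue {x : L | a ≤ x} {x : L | x ≤ ⊥} ∈ SPHset L := by
  apply glue_mem
  · exact ⟨⟨a, le_refl a⟩, fun x y hx hxy => le_trans hx hxy,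
      fun x y hx hy => le_inf hx hy⟩
  · exact ⟨⟨⊥, le_refl ⊥⟩, fun x y hx hyx => le_trans hyx hx,
      fun x y hx hy => sup_le hx hy⟩
  · intro x hax hxb
    exact ha (le_antisymm (le_trans hax hxb) bot_le)

lemma coprin_mem {a : L} (ha : a ≠ ⊤) :
    glue {x : L | ⊤ ≤ x} {x : L | x ≤ a} ∈ SPHset L := by
  apply glue_mem
  · exact ⟨⟨⊤, le_refl ⊤⟩, fun x y hx hxy => le_trans hx hxy,
      fun x y hx hy => le_inf hx hy⟩
  · exact ⟨⟨a, le_refl a⟩, fun x y hx hyx => le_trans hyx hx,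
      fun x y hx hy => sup_le hx hy⟩
  · intro x htx hxa
    exact ha (top_le_iff.mp (le_trans htx hxa))

lemma forced_false {b : L} {k : SPHsub L}
    (h : ∀ h' : SPHsub L, h'.1 b = some true → ¬ ErelP h'.1 k.1) :
    k.1 b = some false := by
  by_cases hb : b = (⊥ : L)
  · subst hb; exact sph_bot k
  · set f : SPHsub L := ⟨glue {x : L | b ≤ x} {x : L | x ≤ ⊥}, prin_mem hb⟩ with hf
    have hfb : f.1 b = some true := glue_true.mpr (le_refl b)
    obtain ⟨x, hfx, hkx⟩ := not_erelP_iff.mp (h f hfb)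
    exact sph_down k hkx (glue_true.mp hfx)

lemma forced_true {a : L} {g : SPHsub L}
    (h : ∀ k : SPHsub L, k.1 a = some false → ¬ ErelP g.1 k.1) :
    g.1 a = some true := by
  by_cases ha : a = (⊤ : L)
  · subst ha; exact sph_top g
  · set k : SPHsub L := ⟨glue {x : L | ⊤ ≤ x} {x : L | x ≤ a}, coprin_mem ha⟩ with hk
    have hka : k.1 a = some false :=
      glue_false.mpr ⟨fun h' => ha (top_le_iff.mp h'), le_refl a⟩
    obtain ⟨x, hgx, hkx⟩ := not_erelP_iff.mp (h k hka)
    exact sph_up g hgx (glue_false.mp hkx).2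

/-- The right polar of a set of SPHs. -/
def rho (A : Set (SPHsub L)) : Set (SPHsub L) := {g | ∀ f ∈ A, ¬ ErelP f.1 g.1}

/-- The left polar of a set of SPHs. -/
def lam (B : Set (SPHsub L)) : Set (SPHsub L) := {f | ∀ g ∈ B, ¬ ErelP f.1 g.1}

lemma rho_anti {A B : Set (SPHsub L)} (h : A ⊆ B) : rho B ⊆ rho A :=
  fun g hg f hf => hg f (h hf)

lemma lam_anti {A B : Set (SPHsub L)} (h : A ⊆ B) : lam B ⊆ lam A :=
  fun f hf g hg => hf g (h hg)

lemma subset_lamrho (A : Set (SPHsub L)) : A ⊆ lam (rho A) :=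
  fun f hf g hg => hg f hf

lemma subset_rholam (B : Set (SPHsub L)) : B ⊆ rho (lam B) :=
  fun g hg f hf => hf g hg

lemma rho_lamrho (A : Set (SPHsub L)) : rho (lam (rho A)) = rho A :=
  subset_antisymm (rho_anti (subset_lamrho A)) (subset_rholam (rho A))

/-- Galois-closedness. -/
def GClosed (A : Set (SPHsub L)) : Prop := lam (rho A) = A

lemma gclosed_lamrho (U : Set (SPHsub L)) : GClosed (lam (rho U)) := by
  show lam (rho (lam (rho U))) = lam (rho U)
  rw [rho_lamrho]

lemma gclosed_iInter {ι : Sort*} {A : ι → Set (SPHsub L)} (h : ∀ i, GClosed (A i)) :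
    GClosed (⋂ i, A i) := by
  apply subset_antisymm
  · refine Set.subset_iInter fun i => ?_
    calc lam (rho (⋂ i, A i)) ⊆ lam (rho (A i)) :=
          lam_anti (rho_anti (Set.iInter_subset A i))
      _ = A i := h i
  · exact subset_lamrho _

/-- The canonical maximal partial `E`-preserving map with `pre1 = A`. -/
noncomputable def mkphi (A : Set (SPHsub L)) : PMap (SPHsub L) :=
  fun f => if f ∈ A then some true else if f ∈ rho A then some false else none

lemma mkphi_true {A : Set (SPHsub L)} {f : SPHsub L} : mkphi A f = some true ↔ f ∈ A := by
  unfold mkphi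
  split_ifs with h1 h2 <;> simp [*]

lemma mkphi_false {A : Set (SPHsub L)} {f : SPHsub L} :
    mkphi A f = some false ↔ f ∈ rho A := by
  unfold mkphi
  split_ifs with h1 h2
  · constructor
    · intro h; exact absurd h (by simp)
    · intro h; exact absurd (erelP_refl f.1) (h f h1)
  · simp [h2]
  · simp [h2]

lemma pre1_mkphi (A : Set (SPHsub L)) : pre1 (mkphi A) = A :=
  Set.ext fun f => mkphi_true

lemma mkphi_mem {A : Set (SPHsub L)} (hA : GClosed A) : mkphi A ∈ MPE (ES L) := by
  constructor
  · intro x y hxy a b hx hy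
    cases a
    · exact Bool.false_le b
    · cases b
      · exact absurd hxy ((mkphi_false.mp hy) x (mkphi_true.mp hx))
      · exact le_refl _
  · intro ψ hψ hext
    funext f
    cases hval : mkphi A f with
    | some v => exact hext hval
    | none =>
      have hfA : f ∉ A := fun h => by rw [mkphi_true.mpr h] at hval; cases hval
      have hfρ : f ∉ rho A := fun h => by rw [mkphi_false.mpr h] at hval; cases hval
      rw [← hA] at hfA
      simp only [lam, Set.mem_setOf_eq, not_forall, not_not] at hfA
      simp only [rho, Set.mem_setOf_eq, not_forall, not_not] at hfρ
      obtain ⟨k, hk, hfk⟩ := hfA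
      obtain ⟨h', hh', hh'f⟩ := hfρ
      cases hψf : ψ f with
      | none => rfl
      | some b =>
        exfalso
        cases b
        · have hψh : ψ h' = some true := hext (mkphi_true.mpr hh')
          exact absurd (hψ hh'f hψh hψf) (by decide)
        · have hψk : ψ k = some false := hext (mkphi_false.mpr hk)
          exact absurd (hψ hfk hψf hψk) (by decide)

/-- Extending a partial map at a single point. -/
noncomputable def extPt {X : Type*} (φ : PMap X) (g : X) (v : Bool) : PMap X :=
  fun x => if x = g then some v else φ x

lemma cy_step (φ : CY L) {g : SPHsub L} (v : Bool) (hnone : φ.1 g = none)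
    (hcons : EPres (ES L) (extPt φ.1 g v)) : False := by
  have hext : PExt (extPt φ.1 g v) φ.1 := by
    intro x a hx
    have hxg : x ≠ g := fun h => by rw [h, hnone] at hx; cases hx
    simp only [extPt, if_neg hxg]
    exact hx
  have heq := φ.2.2 _ hcons hext
  have h2 := congrFun heq g
  simp only [extPt, if_pos rfl] at h2
  rw [hnone] at h2
  cases h2

lemma pre0_eq_rho (φ : CY L) : pre0 φ.1 = rho (pre1 φ.1) := by
  apply subset_antisymm
  · intro g hg f hf herel
    exact absurd (φ.2.1 herel hf hg) (by decide)
  · intro g hg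
    cases hval : φ.1 g with
    | some v =>
      cases v
      · exact hval
      · exact absurd (erelP_refl g.1) (hg g hval)
    | none =>
      exfalso
      refine cy_step φ false hval ?_
      intro x y hxy a b hx hy
      simp only [extPt] at hx hy
      by_cases hxg : x = g
      · rw [if_pos hxg] at hx
        cases Option.some.inj hx
        exact Bool.false_le b
      · rw [if_neg hxg] at hx
        by_cases hyg : y = g
        · rw [if_pos hyg] at hy
          cases Option.some.inj hy
          cases a with
          | false => exact le_refl _
          | true =>
            exfalso
            rw [hyg] at hxy
            exact hg x hx hxy
        · rw [if_neg hyg] at hy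
          exact φ.2.1 hxy hx hy

lemma pre1_eq_lam (φ : CY L) : pre1 φ.1 = lam (pre0 φ.1) := by
  apply subset_antisymm
  · intro f hf k hk herel
    exact absurd (φ.2.1 herel hf hk) (by decide)
  · intro g hg
    cases hval : φ.1 g with
    | some v =>
      cases v
      · exact absurd (erelP_refl g.1) (hg g hval)
      · exact hval
    | none =>
      exfalso
      refine cy_step φ true hval ?_
      intro x y hxy a b hx hy
      simp only [extPt] at hx hy
      by_cases hyg : y = g
      · rw [if_pos hyg] at hy
        cases Option.some.inj hy
        exact Bool.le_true a
      · rw [if_neg hyg] at hy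
        by_cases hxg : x = g
        · rw [if_pos hxg] at hx
          cases Option.some.inj hx
          cases b with
          | true => exact le_refl _
          | false =>
            exfalso
            rw [hxg] at hxy
            exact hg y hy hxy
        · rw [if_neg hxg] at hx
          exact φ.2.1 hxy hx hy

lemma gclosed_pre1 (φ : CY L) : GClosed (pre1 φ.1) := by
  show lam (rho (pre1 φ.1)) = pre1 φ.1
  rw [← pre0_eq_rho, ← pre1_eq_lam]

lemma cy_ext {φ ψ : CY L} (h : pre1 φ.1 = pre1 ψ.1) : φ = ψ := by
  have h0 : pre0 φ.1 = pre0 ψ.1 := by rw [pre0_eq_rho, pre0_eq_rho, h]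
  have h1f : ∀ f, φ.1 f = some true ↔ ψ.1 f = some true := fun f => Set.ext_iff.mp h f
  have h0f : ∀ f, φ.1 f = some false ↔ ψ.1 f = some false := fun f => Set.ext_iff.mp h0 f
  apply Subtype.ext
  funext f
  cases hφ : φ.1 f with
  | some b =>
    cases b
    · exact ((h0f f).mp hφ).symm
    · exact ((h1f f).mp hφ).symm
  | none =>
    cases hψ : ψ.1 f with
    | none => rfl
    | some c =>
      exfalso
      cases c
      · have := (h0f f).mpr hψ
        rw [hφ] at this; cases this
      · have := (h1f f).mpr hψ
        rw [hφ] at this; cases this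

/-- The partial order on `CY L`. -/
def cyPO : PartialOrder (CY L) where
  le φ ψ := pre1 φ.1 ⊆ pre1 ψ.1
  le_refl φ := subset_rfl
  le_trans _ _ _ h h' := Set.Subset.trans h h'
  le_antisymm _ _ h h' := cy_ext (subset_antisymm h h')

/-- Infima in `CY L`. -/
noncomputable def cyInfSet (S : Set (CY L)) : CY L :=
  ⟨mkphi (⋂ φ ∈ S, pre1 φ.1),
    mkphi_mem (gclosed_iInter fun φ => gclosed_iInter fun _ => gclosed_pre1 φ)⟩

lemma pre1_cyInfSet (S : Set (CY L)) : pre1 (cyInfSet S).1 = ⋂ φ ∈ S, pre1 φ.1 :=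
  pre1_mkphi _

lemma rho_W (a : L) : rho (WaS L a) = VaS L a := by
  ext k
  constructor
  · intro hk
    exact forced_false fun h' hh' => hk h' hh'
  · intro hk f hf
    exact not_erelP_iff.mpr ⟨a, hf, hk⟩

lemma lam_V (a : L) : lam (VaS L a) = WaS L a := by
  ext g
  constructor
  · intro hg
    exact forced_true fun k hk => hg k hk
  · intro hg k hk
    exact not_erelP_iff.mpr ⟨a, hg, hk⟩

lemma gclosed_W (a : L) : GClosed (WaS L a) := by
  show lam (rho (WaS L a)) = WaS L a
  rw [rho_W, lam_V]

lemma mkW_eval (a : L) (f : SPHsub L) : mkphi (WaS L a) f = f.1 a := by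
  unfold mkphi
  rw [rho_W]
  simp only [WaS, VaS, Set.mem_setOf_eq]
  split_ifs with h1 h2
  · exact h1.symm
  · exact h2.symm
  · rcases hval : f.1 a with _ | (_ | _)
    · rfl
    · exact absurd hval h2
    · exact absurd hval h1

lemma evalS_mem (a : L) : evalS L a ∈ MPE (ES L) := by
  have h : evalS L a = mkphi (WaS L a) := funext fun f => (mkW_eval a f).symm
  rw [h]
  exact mkphi_mem (gclosed_W a)

lemma pre1_evalS (a : L) : pre1 (evalS L a) = WaS L a := rfl

lemma W_subset_iff {a b : L} : WaS L a ⊆ WaS L b ↔ a ≤ b := by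
  constructor
  · intro h
    by_contra hab
    have ha : a ≠ (⊥ : L) := fun h' => hab (h' ▸ bot_le)
    set f : SPHsub L := ⟨glue {x : L | a ≤ x} {x : L | x ≤ ⊥}, prin_mem ha⟩ with hfdef
    have hfa : f ∈ WaS L a := glue_true.mpr (le_refl a)
    exact hab (glue_true.mp (h hfa))
  · intro hab f hf
    exact sph_up f hf hab

lemma W_inf (a b : L) : WaS L (a ⊓ b) = WaS L a ∩ WaS L b := by
  ext f
  constructor
  · intro hf
    exact ⟨sph_up f hf inf_le_left, sph_up f hf inf_le_right⟩
  · rintro ⟨h1, h2⟩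
    exact sph_inf1 f h1 h2

end Aux

attribute [-instance] Subtype.instLE

/-- Let `L` be a bounded lattice and `Y = D̄♭(L)`. The
complete lattice `C(Y) = MPE(Y,2)`, ordered by `φ ≤ ψ ↔ φ⁻¹(1) ⊆ ψ⁻¹(1)`,
together with the embedding `a ↦ ē_a`, is a canonical extension of `L`:
a completion of `L` that is dense and compact. -/
theorem stmt_17 (L : Type*) [Lattice L] [BoundedOrder L] :
    ∃ inst : CompleteLattice (CY L),
      (∀ φ ψ : CY L, inst.le φ ψ ↔ pre1 φ.1 ⊆ pre1 ψ.1) ∧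
      ∃ e : L → CY L,
        (∀ a : L, (e a).1 = evalS L a) ∧
        Function.Injective e ∧
        (∀ a b : L, e (a ⊓ b) = inst.inf (e a) (e b)) ∧
        (∀ a b : L, e (a ⊔ b) = inst.sup (e a) (e b)) ∧
        e ⊤ = inst.top ∧ e ⊥ = inst.bot ∧
        (∀ φ : CY L,
          φ = inst.sSup {ψ : CY L | (∃ S : Set L, ψ = inst.sInf (e '' S)) ∧ inst.le ψ φ} ∧
          φ = inst.sInf {ψ : CY L | (∃ S : Set L, ψ = inst.sSup (e '' S)) ∧ inst.le φ ψ}) ∧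
        (∀ A B : Set L,
          inst.le (inst.sInf (e '' A)) (inst.sSup (e '' B)) →
          ∃ A' B' : Finset L, ↑A' ⊆ A ∧ ↑B' ⊆ B ∧
            inst.le (inst.sInf (e '' ↑A')) (inst.sSup (e '' ↑B'))) := by
  classical
  letI : PartialOrder (CY L) := cyPO
  letI : InfSet (CY L) := ⟨cyInfSet⟩
  have hglb : ∀ S : Set (CY L), IsGLB S (sInf S) := by
    intro S
    constructor
    · intro φ hφ
      show pre1 (cyInfSet S).1 ⊆ pre1 φ.1
      rw [pre1_cyInfSet]
      exact Set.biInter_subset_of_mem hφ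
    · intro ψ hψ
      show pre1 ψ.1 ⊆ pre1 (cyInfSet S).1
      rw [pre1_cyInfSet]
      exact Set.subset_iInter₂ fun φ hφ => hψ hφ
  letI inst : CompleteLattice (CY L) := completeLatticeOfInf _ hglb
  set e : L → CY L := fun a => ⟨evalS L a, evalS_mem a⟩ with hedef
  have pre1_e : ∀ a : L, pre1 (e a).1 = WaS L a := fun a => rfl
  have pre1_sInf : ∀ S : Set (CY L), pre1 (inst.sInf S).1 = ⋂ φ ∈ S, pre1 φ.1 :=
    fun S => pre1_cyInfSet S
  have sSup_eq : ∀ S : Set (CY L),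
      pre1 (inst.sSup S).1 = lam (rho (⋃ φ ∈ S, pre1 φ.1)) := by
    intro S
    set U : Set (SPHsub L) := ⋃ φ ∈ S, pre1 φ.1 with hU
    set ub : CY L := ⟨mkphi (lam (rho U)), mkphi_mem (gclosed_lamrho U)⟩ with hub
    have h1 : sSup S ≤ ub := by
      apply sSup_le
      intro φ hφ
      show pre1 φ.1 ⊆ pre1 ub.1
      rw [show pre1 ub.1 = lam (rho U) from pre1_mkphi _]
      exact (Set.subset_biUnion_of_mem hφ).trans (subset_lamrho U)
    have h2 : pre1 ub.1 ⊆ pre1 (sSup S).1 := by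
      rw [show pre1 ub.1 = lam (rho U) from pre1_mkphi _]
      have hsub : U ⊆ pre1 (sSup S).1 := by
        apply Set.iUnion₂_subset
        intro φ hφ
        exact le_sSup hφ
      calc lam (rho U) ⊆ lam (rho (pre1 (sSup S).1)) := lam_anti (rho_anti hsub)
        _ = pre1 (sSup S).1 := gclosed_pre1 _
    have := Set.Subset.antisymm (h1 : pre1 (sSup S).1 ⊆ pre1 ub.1) h2
    rw [this]
    exact pre1_mkphi _
  have mem_inf_img : ∀ (S : Set L) (g : SPHsub L),
      g ∈ pre1 (inst.sInf (e '' S)).1 ↔ ∀ a ∈ S, g.1 a = some true := by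
    intro S g
    rw [pre1_sInf]
    constructor
    · intro h a ha
      exact Set.mem_iInter₂.mp h (e a) (Set.mem_image_of_mem e ha)
    · intro h
      apply Set.mem_iInter₂.mpr
      rintro χ ⟨a, ha, rfl⟩
      exact h a ha
  have e_inj : Function.Injective e := by
    intro a b hab
    have h : WaS L a = WaS L b := by
      have := congrArg (fun φ : CY L => pre1 φ.1) hab
      simpa [pre1_e] using this
    exact le_antisymm (W_subset_iff.mp h.le) (W_subset_iff.mp h.ge)
  have inf_eq : ∀ a b : L, e (a ⊓ b) = inst.inf (e a) (e b) := by
    intro a b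
    have h1 : inst.inf (e a) (e b) = inst.sInf {e a, e b} := rfl
    rw [h1]
    apply cy_ext
    rw [pre1_sInf, Set.biInter_pair, pre1_e, pre1_e, pre1_e, W_inf]
  have sup_eq : ∀ a b : L, e (a ⊔ b) = inst.sup (e a) (e b) := by
    intro a b
    have h1 : inst.sup (e a) (e b) = inst.sSup {e a, e b} := sSup_pair.symm
    rw [h1]
    apply cy_ext
    rw [sSup_eq, Set.biUnion_pair, pre1_e, pre1_e, pre1_e]
    apply subset_antisymm
    · intro f hf k hk
      have hka : k.1 a = some false :=
        forced_false fun h' hh' => hk h' (Set.mem_union_left _ hh')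
      have hkb : k.1 b = some false :=
        forced_false fun h' hh' => hk h' (Set.mem_union_right _ hh')
      exact not_erelP_iff.mpr ⟨a ⊔ b, hf, sph_sup0 k hka hkb⟩
    · intro g hg
      apply forced_true
      intro k hk
      apply hg
      intro h' hh'
      rcases hh' with h | h
      · exact not_erelP_iff.mpr ⟨a, h, sph_down k hk le_sup_left⟩
      · exact not_erelP_iff.mpr ⟨b, h, sph_down k hk le_sup_right⟩
  have top_eq : e ⊤ = inst.top := by
    apply le_antisymm le_top
    show pre1 (inst.top).1 ⊆ pre1 (e ⊤).1
    intro f _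
    exact sph_top f
  have bot_eq : e ⊥ = inst.bot := by
    apply le_antisymm _ bot_le
    show pre1 (e ⊥).1 ⊆ pre1 (inst.bot).1
    intro f hf
    exact absurd ((sph_bot f).symm.trans hf) (by simp)
  have density : ∀ φ : CY L,
      φ = inst.sSup {ψ : CY L | (∃ S : Set L, ψ = inst.sInf (e '' S)) ∧ inst.le ψ φ} ∧
      φ = inst.sInf {ψ : CY L | (∃ S : Set L, ψ = inst.sSup (e '' S)) ∧ inst.le φ ψ} := by
    intro φ
    constructor
    · apply le_antisymm
      · show pre1 φ.1 ⊆ pre1 (inst.sSup _).1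
        rw [sSup_eq]
        intro f hf
        apply subset_lamrho _
        set Sf : Set L := {a : L | f.1 a = some true} with hSf
        have hle : inst.sInf (e '' Sf) ≤ φ := by
          show pre1 (inst.sInf (e '' Sf)).1 ⊆ pre1 φ.1
          intro g hg
          have hg' : ∀ a, f.1 a = some true → g.1 a = some true :=
            fun a ha => (mem_inf_img Sf g).mp hg a ha
          rw [← gclosed_pre1 φ]
          intro k hk
          obtain ⟨x, hfx, hkx⟩ := not_erelP_iff.mp (subset_lamrho _ hf k hk)
          exact not_erelP_iff.mpr ⟨x, hg' x hfx, hkx⟩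
        refine Set.mem_biUnion (⟨⟨Sf, rfl⟩, hle⟩ :
          inst.sInf (e '' Sf) ∈ {ψ : CY L | (∃ S : Set L, ψ = inst.sInf (e '' S)) ∧ inst.le ψ φ}) ?_
        exact (mem_inf_img Sf f).mpr fun a ha => ha
      · exact sSup_le fun ψ hψ => hψ.2
    · apply le_antisymm (le_sInf fun ψ hψ => hψ.2)
      show pre1 (inst.sInf _).1 ⊆ pre1 φ.1
      intro g hg
      rw [← gclosed_pre1 φ]
      intro k hk
      set Sk : Set L := {a : L | k.1 a = some false} with hSk
      have hφψ : inst.le φ (inst.sSup (e '' Sk)) := by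
        show pre1 φ.1 ⊆ pre1 (inst.sSup (e '' Sk)).1
        rw [sSup_eq]
        intro f hf
        apply subset_lamrho
        obtain ⟨x, hfx, hkx⟩ := not_erelP_iff.mp (subset_lamrho _ hf k hk)
        exact Set.mem_biUnion (Set.mem_image_of_mem e hkx) hfx
      have hmem : inst.sSup (e '' Sk) ∈
          {ψ : CY L | (∃ S : Set L, ψ = inst.sSup (e '' S)) ∧ inst.le φ ψ} :=
        ⟨⟨Sk, rfl⟩, hφψ⟩
      have hgψ : g ∈ pre1 (inst.sSup (e '' Sk)).1 := by
        rw [pre1_sInf] at hg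
        exact Set.biInter_subset_of_mem hmem hg
      rw [sSup_eq] at hgψ
      apply hgψ
      intro h' hh'
      obtain ⟨χ, hχ, hmem'⟩ := Set.mem_iUnion₂.mp hh'
      obtain ⟨x, hx, rfl⟩ := hχ
      exact not_erelP_iff.mpr ⟨x, hmem', hx⟩
  have compact : ∀ A B : Set L,
      inst.le (inst.sInf (e '' A)) (inst.sSup (e '' B)) →
      ∃ A' B' : Finset L, ↑A' ⊆ A ∧ ↑B' ⊆ B ∧
        inst.le (inst.sInf (e '' ↑A')) (inst.sSup (e '' ↑B')) := by
    intro A B hAB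
    set F : Set L := {c | ∃ T : Finset L, ↑T ⊆ A ∧ T.inf id ≤ c} with hFdef
    set I : Set L := {c | ∃ T : Finset L, ↑T ⊆ B ∧ c ≤ T.sup id} with hIdef
    by_cases hFI : ∃ c, c ∈ F ∧ c ∈ I
    · obtain ⟨c, ⟨T₁, hT₁, h1⟩, ⟨T₂, hT₂, h2⟩⟩ := hFI
      refine ⟨T₁, T₂, hT₁, hT₂, ?_⟩
      show pre1 (inst.sInf (e '' ↑T₁)).1 ⊆ pre1 (inst.sSup (e '' ↑T₂)).1
      rw [sSup_eq]
      intro g hg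
      have hg' : ∀ a ∈ T₁, g.1 a = some true :=
        fun a ha => (mem_inf_img _ g).mp hg a ha
      have hgc : g.1 (T₂.sup id) = some true :=
        sph_up g (sph_finset_inf g T₁ hg') (le_trans h1 h2)
      intro k hk
      have hk0 : ∀ b ∈ T₂, k.1 b = some false := by
        intro b hb
        apply forced_false
        intro h' hh'
        apply hk
        exact Set.mem_biUnion (Set.mem_image_of_mem e (by exact_mod_cast hb)) hh'
      exact not_erelP_iff.mpr ⟨T₂.sup id, hgc, sph_finset_sup0 k T₂ hk0⟩
    · exfalso
      push_neg at hFI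
      have hF : IsLatFilter L F := by
        refine ⟨⟨⊤, ∅, by simp, by simp⟩, ?_, ?_⟩
        · rintro x y ⟨T, hT, h⟩ hxy
          exact ⟨T, hT, h.trans hxy⟩
        · rintro x y ⟨T, hT, h⟩ ⟨T', hT', h'⟩
          refine ⟨T ∪ T', ?_, ?_⟩
          · rw [Finset.coe_union]; exact Set.union_subset hT hT'
          · rw [Finset.inf_union]; exact inf_le_inf h h'
      have hI : IsLatIdeal L I := by
        refine ⟨⟨⊥, ∅, by simp, by simp⟩, ?_, ?_⟩
        · rintro x y ⟨T, hT, h⟩ hyx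
          exact ⟨T, hT, hyx.trans h⟩
        · rintro x y ⟨T, hT, h⟩ ⟨T', hT', h'⟩
          refine ⟨T ∪ T', ?_, ?_⟩
          · rw [Finset.coe_union]; exact Set.union_subset hT hT'
          · rw [Finset.sup_union]; exact sup_le_sup h h'
      set f : SPHsub L := ⟨glue F I, glue_mem hF hI fun x hx hix => hFI x hx hix⟩ with hf
      have hfA : f ∈ pre1 (inst.sInf (e '' A)).1 := by
        apply (mem_inf_img A f).mpr
        intro a ha
        exact glue_true.mpr ⟨{a}, by simpa using ha, by simp⟩
      have hfB := hAB hfA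
      rw [sSup_eq] at hfB
      have hfrho : f ∈ rho (⋃ χ ∈ e '' B, pre1 χ.1) := by
        intro h' hh'
        obtain ⟨χ, hχ, hmem⟩ := Set.mem_iUnion₂.mp hh'
        obtain ⟨b, hb, rfl⟩ := hχ
        refine not_erelP_iff.mpr ⟨b, hmem, ?_⟩
        apply glue_false.mpr
        have hbI : b ∈ I := ⟨{b}, by simpa using hb, by simp⟩
        exact ⟨fun hbF => hFI b hbF hbI, hbI⟩
      exact hfB f hfrho (erelP_refl f.1)
  exact ⟨inst, fun φ ψ => Iff.rfl, e, fun a => rfl, e_inj, inf_eq, sup_eq,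
    top_eq, bot_eq, density, compact⟩


end CanExt
end

section
/- Let u : L → K be a homomorphism of bounded lattices. Then: (a) for every f ∈ SPH(K,2_B), the partial map f∘u (with domain u⁻¹(dom(f)) and value f(u(a)) at a in its domain) is an SPH from L to 2_B; write D̄♭(u)(f) = f∘u. (b) For every η ∈ MPE(D̄♭(L),2), the partial map η∘D̄♭(u) on SPH(K,2_B) (defined at f exactly when D̄♭(u)(f) ∈ dom(η), with value η(D̄♭(u)(f))) belongs to MPE(D̄♭(K),2). (c) The resulting map η ↦ η∘D̄♭(u) from the complete lattice MPE(D̄♭(L),2) to the complete lattice MPE(D̄♭(K),2) preserves arbitrary meets and arbitrary joins, i.e. it is a complete lattice homomorphism between the canonical extensions of L and of K. -/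
namespace CanExt

open Classical

section Aux

variable {X : Type*}

def rgt (E : X → X → Prop) (A : Set X) : Set X := {y | ∀ x ∈ A, ¬ E x y}
def lft (E : X → X → Prop) (B : Set X) : Set X := {x | ∀ y ∈ B, ¬ E x y}

noncomputable def pairMap (A B : Set X) : PMap X := fun x =>
  if x ∈ A then some true else if x ∈ B then some false else none

lemma pre1_pairMap {A B : Set X} : pre1 (pairMap A B) = A := by
  ext x
  simp only [pre1, pairMap, Set.mem_setOf_eq]
  split_ifs with h1 h2 <;> simp [h1]

lemma pre0_pairMap {A B : Set X} (h : ∀ x ∈ B, x ∉ A) : pre0 (pairMap A B) = B := by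
  ext x
  simp only [pre0, pairMap, Set.mem_setOf_eq]
  split_ifs with h1 h2
  · exact iff_of_false (by simp) fun hb => h x hb h1
  · exact iff_of_true rfl h2
  · exact iff_of_false (by simp) h2

lemma pmap_ext {φ ψ : PMap X} (h1 : pre1 φ = pre1 ψ) (h0 : pre0 φ = pre0 ψ) : φ = ψ := by
  funext x
  have e1 : φ x = some true ↔ ψ x = some true := Set.ext_iff.1 h1 x
  have e0 : φ x = some false ↔ ψ x = some false := Set.ext_iff.1 h0 x
  rcases hφ : φ x with _ | b
  · rw [hφ] at e1 e0
    rcases hψ : ψ x with _ | c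
    · rfl
    · rw [hψ] at e1 e0
      cases c
      · simpa using e0.2 rfl
      · simpa using e1.2 rfl
  · rw [hφ] at e1 e0
    cases b
    · exact (e0.1 rfl).symm
    · exact (e1.1 rfl).symm

lemma subset_lft_rgt (E : X → X → Prop) (A : Set X) : A ⊆ lft E (rgt E A) :=
  fun x hx y hy => hy x hx

lemma subset_rgt_lft (E : X → X → Prop) (B : Set X) : B ⊆ rgt E (lft E B) :=
  fun y hy x hx => hx y hy

lemma rgt_anti (E : X → X → Prop) {A A' : Set X} (h : A ⊆ A') : rgt E A' ⊆ rgt E A :=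
  fun y hy x hx => hy x (h hx)

lemma lft_anti (E : X → X → Prop) {B B' : Set X} (h : B ⊆ B') : lft E B' ⊆ lft E B :=
  fun x hx y hy => hx y (h hy)

lemma rgt_lft_rgt (E : X → X → Prop) (A : Set X) : rgt E (lft E (rgt E A)) = rgt E A :=
  (rgt_anti E (subset_lft_rgt E A)).antisymm (subset_rgt_lft E (rgt E A))

theorem mem_MPE_iff {E : X → X → Prop} (hrefl : ∀ x, E x x) {φ : PMap X} :
    φ ∈ MPE E ↔ pre1 φ = lft E (pre0 φ) ∧ pre0 φ = rgt E (pre1 φ) := by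
  constructor
  · rintro ⟨hp, hmax⟩
    constructor
    · apply Set.Subset.antisymm
      · intro x hx y hy hE
        exact absurd (hp hE hx hy) (by decide)
      · intro x hx
        by_contra hne
        have hx0 : x ∉ pre0 φ := fun h0 => hx x h0 (hrefl x)
        have hxn : φ x = none := by
          rcases h : φ x with _ | b
          · rfl
          · cases b
            · exact absurd h hx0
            · exact absurd h hne
        set ψ : PMap X := fun z => if z = x then some true else φ z with hψ
        have hext : PExt ψ φ := by
          intro z a hz
          have : z ≠ x := fun h => by rw [h, hxn] at hz; exact Option.some_ne_none a hz.symm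
          simp only [hψ, if_neg this]; exact hz
        have hpres : EPres E ψ := by
          intro z w hE a b hz hw
          simp only [hψ] at hz hw
          by_cases hzx : z = x
          · subst hzx
            rw [if_pos rfl] at hz
            cases Option.some.inj hz
            by_cases hwx : w = z
            · subst hwx; rw [if_pos rfl] at hw; cases Option.some.inj hw; exact le_refl _
            · rw [if_neg hwx] at hw
              cases b
              · exact absurd hE (hx w hw)
              · exact le_refl _
          · rw [if_neg hzx] at hz
            by_cases hwx : w = x
            · subst hwx
              rw [if_pos rfl] at hw
              cases Option.some.inj hw
              exact Bool.le_true a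
            · rw [if_neg hwx] at hw
              exact hp hE hz hw
        have := hmax ψ hpres hext
        have : ψ x = φ x := by rw [this]
        rw [hxn, hψ] at this
        simp at this
    · apply Set.Subset.antisymm
      · intro y hy x hx hE
        exact absurd (hp hE hx hy) (by decide)
      · intro x hx
        by_contra hne
        have hx1 : x ∉ pre1 φ := fun h1 => hx x h1 (hrefl x)
        have hxn : φ x = none := by
          rcases h : φ x with _ | b
          · rfl
          · cases b
            · exact absurd h hne
            · exact absurd h hx1
        set ψ : PMap X := fun z => if z = x then some false else φ z with hψ
        have hext : PExt ψ φ := by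
          intro z a hz
          have : z ≠ x := fun h => by rw [h, hxn] at hz; exact Option.some_ne_none a hz.symm
          simp only [hψ, if_neg this]; exact hz
        have hpres : EPres E ψ := by
          intro z w hE a b hz hw
          simp only [hψ] at hz hw
          by_cases hzx : z = x
          · subst hzx
            rw [if_pos rfl] at hz
            cases Option.some.inj hz
            exact Bool.false_le b
          · rw [if_neg hzx] at hz
            by_cases hwx : w = x
            · subst hwx
              rw [if_pos rfl] at hw
              cases Option.some.inj hw
              cases a
              · exact le_refl _
              · exact absurd hE (hx z hz)
            · rw [if_neg hwx] at hw
              exact hp hE hz hw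
        have := hmax ψ hpres hext
        have : ψ x = φ x := by rw [this]
        rw [hxn, hψ] at this
        simp at this
  · rintro ⟨h1, h0⟩
    constructor
    · intro x y hE a b hx hy
      cases a
      · exact Bool.false_le b
      · cases b
        · exact absurd hE ((h1 ▸ hx : x ∈ lft E (pre0 φ)) y hy)
        · exact le_refl _
    · intro ψ hψp hψe
      funext x
      rcases hφx : φ x with _ | a
      · have hx1 : x ∉ pre1 φ := by rw [pre1, Set.mem_setOf_eq, hφx]; simp
        have hx0 : x ∉ pre0 φ := by rw [pre0, Set.mem_setOf_eq, hφx]; simp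
        have hxl : x ∉ lft E (pre0 φ) := h1 ▸ hx1
        have hxr : x ∉ rgt E (pre1 φ) := h0 ▸ hx0
        simp only [lft, Set.mem_setOf_eq, not_forall] at hxl
        simp only [rgt, Set.mem_setOf_eq, not_forall] at hxr
        obtain ⟨y, hy0, hExy⟩ := hxl
        obtain ⟨z, hz1, hEzx⟩ := hxr
        rw [not_not] at hExy hEzx
        rcases hψx : ψ x with _ | a
        · rfl
        · cases a
          · exact absurd (hψp hEzx (hψe hz1) hψx) (by decide)
          · exact absurd (hψp hExy hψx (hψe hy0)) (by decide)
      · exact hψe hφx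

lemma mpe_pre1_eq {E : X → X → Prop} (hrefl : ∀ x, E x x) {φ ψ : PMap X}
    (hφ : φ ∈ MPE E) (hψ : ψ ∈ MPE E) (h : pre1 φ = pre1 ψ) : φ = ψ :=
  pmap_ext h (by rw [((mem_MPE_iff hrefl).1 hφ).2, ((mem_MPE_iff hrefl).1 hψ).2, h])

end Aux

section LatAux

variable {L : Type*} [Lattice L] [BoundedOrder L]

lemma sph_top_s19 (f : SPHsub L) : (⊤ : L) ∈ pre1 f.1 := by
  obtain ⟨⟨⟨a, ha⟩, hup, -⟩, -, -⟩ := f.2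
  exact hup ha le_top

lemma sph_bot_s19 (f : SPHsub L) : (⊥ : L) ∈ pre0 f.1 := by
  obtain ⟨-, ⟨⟨a, ha⟩, hdn, -⟩, -⟩ := f.2
  exact hdn ha bot_le

lemma sph_not_both (f : SPHsub L) {x : L} (h1 : x ∈ pre1 f.1) (h0 : x ∈ pre0 f.1) : False :=
  Set.disjoint_left.1 f.2.2.2 h1 h0

lemma es_iff {f g : SPHsub L} :
    ES L f g ↔ ∀ ⦃x : L⦄, x ∈ pre1 f.1 → x ∉ pre0 g.1 := by
  constructor
  · intro h x h1 h0
    exact absurd (h h1 h0) (by decide)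
  · intro h x a b h1 h0
    cases a
    · exact Bool.false_le b
    · cases b
      · exact absurd h0 (h h1)
      · exact le_refl _

lemma es_refl (f : SPHsub L) : ES L f f :=
  es_iff.2 fun _ h1 h0 => sph_not_both f h1 h0

lemma mpe_up {η : PMap (SPHsub L)} (hη : η ∈ MPE (ES L)) {ψ χ : SPHsub L}
    (hψ : ψ ∈ pre1 η) (hsub : pre1 ψ.1 ⊆ pre1 χ.1) : χ ∈ pre1 η := by
  obtain ⟨h1, h0⟩ := (mem_MPE_iff es_refl).1 hη
  by_contra hne
  rcases hc : η χ with _ | b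
  · have hxl : χ ∉ lft (ES L) (pre0 η) := h1 ▸ hne
    simp only [lft, Set.mem_setOf_eq, not_forall] at hxl
    obtain ⟨y, hy0, hEχy⟩ := hxl
    rw [not_not] at hEχy
    have hEψy : ES L ψ y := es_iff.2 fun x hx => es_iff.1 hEχy (hsub hx)
    exact (h0 ▸ hy0 : y ∈ rgt (ES L) (pre1 η)) ψ hψ hEψy
  · cases b
    · have hχ0 : χ ∈ rgt (ES L) (pre1 η) := h0 ▸ hc
      exact hχ0 ψ hψ (es_iff.2 fun x hx => sph_not_both χ (hsub hx))
    · exact hne hc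

lemma mpe_closed (φ : CY L) : lft (ES L) (rgt (ES L) (pre1 φ.1)) = pre1 φ.1 := by
  obtain ⟨h1, h0⟩ := (mem_MPE_iff es_refl).1 φ.2
  rw [← h0, ← h1]

noncomputable def sInfC (S : Set (CY L)) : CY L :=
  ⟨pairMap (⋂ φ ∈ S, pre1 φ.1) (rgt (ES L) (⋂ φ ∈ S, pre1 φ.1)), by
    have hd : ∀ x ∈ rgt (ES L) (⋂ φ ∈ S, pre1 φ.1), x ∉ (⋂ φ ∈ S, pre1 φ.1) :=
      fun x hx hxA => hx x hxA (es_refl x)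
    have hcl : lft (ES L) (rgt (ES L) (⋂ φ ∈ S, pre1 φ.1)) = ⋂ φ ∈ S, pre1 φ.1 := by
      apply Set.Subset.antisymm
      · intro x hx
        apply Set.mem_iInter₂.2
        intro φ hφ
        have hsub : (⋂ φ ∈ S, pre1 φ.1) ⊆ pre1 φ.1 := Set.biInter_subset_of_mem hφ
        exact (mpe_closed φ) ▸ (lft_anti _ (rgt_anti _ hsub) hx)
      · exact subset_lft_rgt _ _
    refine (mem_MPE_iff es_refl).2 ⟨?_, ?_⟩
    · rw [pre1_pairMap, pre0_pairMap hd, hcl]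
    · rw [pre1_pairMap, pre0_pairMap hd]⟩

noncomputable def sSupC (S : Set (CY L)) : CY L :=
  ⟨pairMap (lft (ES L) (rgt (ES L) (⋃ φ ∈ S, pre1 φ.1)))
      (rgt (ES L) (⋃ φ ∈ S, pre1 φ.1)), by
    have hd : ∀ x ∈ rgt (ES L) (⋃ φ ∈ S, pre1 φ.1),
        x ∉ lft (ES L) (rgt (ES L) (⋃ φ ∈ S, pre1 φ.1)) :=
      fun x hx hxA => hxA x hx (es_refl x)
    refine (mem_MPE_iff es_refl).2 ⟨?_, ?_⟩
    · rw [pre1_pairMap, pre0_pairMap hd]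
    · rw [pre1_pairMap, pre0_pairMap hd, rgt_lft_rgt]⟩

lemma pre1_sInfC (S : Set (CY L)) : pre1 (sInfC S).1 = ⋂ φ ∈ S, pre1 φ.1 :=
  pre1_pairMap

lemma pre1_sSupC (S : Set (CY L)) :
    pre1 (sSupC S).1 = lft (ES L) (rgt (ES L) (⋃ φ ∈ S, pre1 φ.1)) :=
  pre1_pairMap

lemma le_sSupC (S : Set (CY L)) (φ : CY L) (hφ : φ ∈ S) : pre1 φ.1 ⊆ pre1 (sSupC S).1 := by
  rw [pre1_sSupC]
  exact fun x hx => subset_lft_rgt _ _ (Set.mem_biUnion hφ hx)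

lemma sSupC_le (S : Set (CY L)) (φ : CY L) (h : ∀ ψ ∈ S, pre1 ψ.1 ⊆ pre1 φ.1) :
    pre1 (sSupC S).1 ⊆ pre1 φ.1 := by
  rw [pre1_sSupC]
  exact (lft_anti _ (rgt_anti _ (Set.iUnion₂_subset h))).trans (mpe_closed φ).le

lemma sInfC_le (S : Set (CY L)) (φ : CY L) (hφ : φ ∈ S) : pre1 (sInfC S).1 ⊆ pre1 φ.1 := by
  rw [pre1_sInfC]
  exact Set.biInter_subset_of_mem hφ

lemma le_sInfC (S : Set (CY L)) (φ : CY L) (h : ∀ ψ ∈ S, pre1 φ.1 ⊆ pre1 ψ.1) :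
    pre1 φ.1 ⊆ pre1 (sInfC S).1 := by
  rw [pre1_sInfC]
  exact fun x hx => Set.mem_iInter₂.2 fun ψ hψ => h ψ hψ hx

noncomputable def instCY : CompleteLattice (CY L) where
  le φ ψ := pre1 φ.1 ⊆ pre1 ψ.1
  le_refl _ := subset_rfl
  le_trans _ _ _ h h' := Set.Subset.trans h h'
  le_antisymm φ ψ h h' := Subtype.ext (mpe_pre1_eq es_refl φ.2 ψ.2 (Set.Subset.antisymm h h'))
  sInf := sInfC
  isGLB_sInf S := ⟨fun φ hφ => sInfC_le S φ hφ, fun φ h => le_sInfC S φ h⟩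
  sSup := sSupC
  isLUB_sSup S := ⟨fun φ hφ => le_sSupC S φ hφ, fun φ h => sSupC_le S φ h⟩
  inf φ ψ := sInfC {φ, ψ}
  inf_le_left φ ψ := sInfC_le _ φ (by simp)
  inf_le_right φ ψ := sInfC_le _ ψ (by simp)
  le_inf χ φ ψ h h' := le_sInfC _ χ (by rintro ζ (rfl | rfl) <;> assumption)
  sup φ ψ := sSupC {φ, ψ}
  le_sup_left φ ψ := le_sSupC _ φ (by simp)
  le_sup_right φ ψ := le_sSupC _ ψ (by simp)
  sup_le φ ψ χ h h' := sSupC_le _ χ (by rintro ζ (rfl | rfl) <;> assumption)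
  top := sSupC Set.univ
  le_top φ := le_sSupC _ φ (Set.mem_univ φ)
  bot := sInfC Set.univ
  bot_le φ := sInfC_le _ φ (Set.mem_univ φ)

end LatAux

section UmapAux

variable {L K : Type*} [Lattice L] [BoundedOrder L] [Lattice K] [BoundedOrder K]
variable (u : BoundedLatticeHom L K)

lemma Du_mem (f : SPHsub K) : (fun a : L => f.1 (u a)) ∈ SPHset L := by
  obtain ⟨⟨-, hFup, hFinf⟩, ⟨-, hIdn, hIsup⟩, hdisj⟩ := f.2
  refine ⟨⟨⟨⊤, ?_⟩, ?_, ?_⟩, ⟨⟨⊥, ?_⟩, ?_, ?_⟩, ?_⟩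
  · show f.1 (u ⊤) = some true
    rw [map_top]; exact sph_top_s19 f
  · intro a b ha hab
    exact hFup ha (OrderHomClass.mono u hab)
  · intro a b ha hb
    show f.1 (u (a ⊓ b)) = some true
    rw [map_inf]; exact hFinf ha hb
  · show f.1 (u ⊥) = some false
    rw [map_bot]; exact sph_bot_s19 f
  · intro a b ha hab
    exact hIdn ha (OrderHomClass.mono u hab)
  · intro a b ha hb
    show f.1 (u (a ⊔ b)) = some false
    rw [map_sup]; exact hIsup ha hb
  · exact Set.disjoint_left.2 fun a h1 h0 => Set.disjoint_left.1 hdisj h1 h0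

noncomputable def Du (f : SPHsub K) : SPHsub L := ⟨fun a : L => f.1 (u a), Du_mem u f⟩

lemma es_Du {g h : SPHsub K} (hgh : ES K g h) : ES L (Du u g) (Du u h) :=
  es_iff.2 fun _ h1 h0 => es_iff.1 hgh h1 h0

lemma exists_fwd1 {ψ : SPHsub L} {h : SPHsub K}
    (hc : ∀ ⦃a : L⦄, a ∈ pre1 ψ.1 → a ∉ pre0 (Du u h).1) :
    ∃ g' : SPHsub K, ES K g' h ∧ pre1 ψ.1 ⊆ pre1 (Du u g').1 := by
  set F : Set K := {k | ∃ a ∈ pre1 ψ.1, u a ≤ k} with hF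
  set I : Set K := {k | k ≤ ⊥} with hI
  have hdisj : ∀ k ∈ I, k ∉ F := by
    rintro k hk ⟨a, ha, hak⟩
    have : u a ∈ pre0 h.1 := h.2.2.1.2.1 (sph_bot_s19 h) (hak.trans hk)
    exact hc ha this
  have hmem : ∀ x : K, x ∈ F → x ∈ pre1 (pairMap F I) := fun x hx =>
    (Set.ext_iff.1 pre1_pairMap x).2 hx
  obtain ⟨a0, ha0⟩ := ψ.2.1.1
  have hg'mem : pairMap F I ∈ SPHset K := by
    refine ⟨?_, ?_, ?_⟩
    · rw [pre1_pairMap]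
      refine ⟨⟨u a0, a0, ha0, le_rfl⟩, fun k k' hk hkk' =>
        hk.imp fun a ha => ⟨ha.1, ha.2.trans hkk'⟩, ?_⟩
      rintro k k' ⟨a, ha, hak⟩ ⟨a', ha', hak'⟩
      exact ⟨a ⊓ a', ψ.2.1.2.2 ha ha', by rw [map_inf]; exact inf_le_inf hak hak'⟩
    · rw [pre0_pairMap hdisj]
      exact ⟨⟨⊥, le_rfl⟩, fun k k' hk hkk' => hkk'.trans hk,
        fun k k' hk hk' => sup_le hk hk'⟩
    · rw [pre1_pairMap, pre0_pairMap hdisj]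
      exact Set.disjoint_left.2 fun k hk hk' => hdisj k hk' hk
  refine ⟨⟨pairMap F I, hg'mem⟩, ?_, ?_⟩
  · refine es_iff.2 fun k hk hk0 => ?_
    obtain ⟨a, ha, hak⟩ := (Set.ext_iff.1 (pre1_pairMap (A := F) (B := I)) k).1 hk
    have : u a ∈ pre0 h.1 := h.2.2.1.2.1 hk0 hak
    exact hc ha this
  · intro a ha
    exact hmem (u a) ⟨a, ha, le_rfl⟩

lemma exists_fwd0 {φ : SPHsub L} {g : SPHsub K}
    (hc : ∀ ⦃a : L⦄, a ∈ pre1 (Du u g).1 → a ∉ pre0 φ.1) :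
    ∃ h : SPHsub K, ES K g h ∧ ∀ g' : SPHsub K, ES K g' h → ES L (Du u g') φ := by
  set F : Set K := {k | ⊤ ≤ k} with hF
  set I : Set K := {k | ∃ b ∈ pre0 φ.1, k ≤ u b} with hI
  have hdisj : ∀ k ∈ I, k ∉ F := by
    rintro k ⟨b, hb, hkb⟩ hk
    have hub : (⊤ : K) ≤ u b := le_trans hk hkb
    have : u b ∈ pre1 g.1 := g.2.1.2.1 (sph_top_s19 g) hub
    exact hc (show b ∈ pre1 (Du u g).1 from this) hb
  obtain ⟨b0, hb0⟩ := φ.2.2.1.1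
  have hhmem : pairMap F I ∈ SPHset K := by
    refine ⟨?_, ?_, ?_⟩
    · rw [pre1_pairMap]
      exact ⟨⟨⊤, le_rfl⟩, fun k k' hk hkk' => hk.trans hkk',
        fun k k' hk hk' => le_inf hk hk'⟩
    · rw [pre0_pairMap hdisj]
      refine ⟨⟨u b0, b0, hb0, le_rfl⟩, fun k k' hk hkk' =>
        hk.imp fun b hb => ⟨hb.1, hkk'.trans hb.2⟩, ?_⟩
      rintro k k' ⟨b, hb, hkb⟩ ⟨b', hb', hkb'⟩
      exact ⟨b ⊔ b', φ.2.2.1.2.2 hb hb', by rw [map_sup]; exact sup_le_sup hkb hkb'⟩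
    · rw [pre1_pairMap, pre0_pairMap hdisj]
      exact Set.disjoint_left.2 fun k hk hk' => hdisj k hk' hk
  refine ⟨⟨pairMap F I, hhmem⟩, ?_, ?_⟩
  · refine es_iff.2 fun k hk hk0 => ?_
    obtain ⟨b, hb, hkb⟩ := (Set.ext_iff.1 (pre0_pairMap (A := F) hdisj) k).1 hk0
    have : u b ∈ pre1 g.1 := g.2.1.2.1 hk hkb
    exact hc (show b ∈ pre1 (Du u g).1 from this) hb
  · intro g' hE
    refine es_iff.2 fun a ha ha0 => ?_
    have hua : u a ∈ pre0 (pairMap F I) :=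
      (Set.ext_iff.1 (pre0_pairMap (A := F) hdisj) (u a)).2 ⟨a, ha0, le_rfl⟩
    exact es_iff.1 hE ha hua

lemma key2 {U : Set (SPHsub L)}
    (hU : ∀ ψ ∈ U, ∀ χ : SPHsub L, pre1 ψ.1 ⊆ pre1 χ.1 → χ ∈ U) :
    Du u ⁻¹' (rgt (ES L) U) = rgt (ES K) (Du u ⁻¹' U) := by
  ext h
  constructor
  · intro hh g' hg' hE
    exact hh (Du u g') hg' (es_Du u hE)
  · intro hh ψ hψ hE
    have hc : ∀ ⦃a : L⦄, a ∈ pre1 ψ.1 → a ∉ pre0 (Du u h).1 :=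
      fun a h1 h0 => es_iff.1 hE h1 h0
    obtain ⟨g', hEg, hsub⟩ := exists_fwd1 u hc
    exact hh g' (hU ψ hψ (Du u g') hsub) hEg

lemma key1 {U : Set (SPHsub L)}
    (hU : ∀ ψ ∈ U, ∀ χ : SPHsub L, pre1 ψ.1 ⊆ pre1 χ.1 → χ ∈ U) :
    Du u ⁻¹' (lft (ES L) (rgt (ES L) U)) = lft (ES K) (rgt (ES K) (Du u ⁻¹' U)) := by
  ext g
  constructor
  · intro hg h hh hE
    have hmem : Du u h ∈ rgt (ES L) U := (Set.ext_iff.1 (key2 u hU) h).2 hh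
    exact hg (Du u h) hmem (es_Du u hE)
  · intro hg φ hφ hE
    have hc : ∀ ⦃a : L⦄, a ∈ pre1 (Du u g).1 → a ∉ pre0 φ.1 :=
      fun a h1 h0 => es_iff.1 hE h1 h0
    obtain ⟨h, hEg, hprop⟩ := exists_fwd0 u hc
    have hhr : h ∈ rgt (ES K) (Du u ⁻¹' U) :=
      fun g' hg' hE' => hφ (Du u g') hg' (hprop g' hE')
    exact hg h hhr hEg

lemma pre1_up {η : PMap (SPHsub L)} (hη : η ∈ MPE (ES L)) :
    ∀ ψ ∈ pre1 η, ∀ χ : SPHsub L, pre1 ψ.1 ⊆ pre1 χ.1 → χ ∈ pre1 η :=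
  fun ψ hψ χ hsub => mpe_up hη hψ hsub

lemma part_b {η : PMap (SPHsub L)} (hη : η ∈ MPE (ES L)) :
    (fun f : SPHsub K => η (Du u f)) ∈ MPE (ES K) := by
  obtain ⟨h1, h0⟩ := (mem_MPE_iff es_refl).1 hη
  have hU := pre1_up hη
  have hA : pre1 η = lft (ES L) (rgt (ES L) (pre1 η)) := h1.trans (by rw [h0])
  refine (mem_MPE_iff es_refl).2 ⟨?_, ?_⟩
  · show Du u ⁻¹' pre1 η = lft (ES K) (pre0 (fun f : SPHsub K => η (Du u f)))
    have h2 : pre0 (fun f : SPHsub K => η (Du u f)) = rgt (ES K) (Du u ⁻¹' pre1 η) := by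
      show Du u ⁻¹' pre0 η = _
      rw [h0, key2 u hU]
    rw [h2, ← key1 u hU, ← hA]
  · show Du u ⁻¹' pre0 η = rgt (ES K) (Du u ⁻¹' pre1 η)
    rw [h0, key2 u hU]

end UmapAux

/-- Let `u : L → K` be a homomorphism of bounded lattices.
(a) For every `f ∈ SPH(K,2_B)` the partial map `f ∘ u` is an SPH from `L`;
write `D̄♭(u)(f) = f ∘ u`. (b) For every `η ∈ MPE(D̄♭(L),2)` the partial map
`η ∘ D̄♭(u)` belongs to `MPE(D̄♭(K),2)`. (c) The resulting map
`η ↦ η ∘ D̄♭(u)` is a complete lattice homomorphism (preserving arbitrary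
meets and joins) from the canonical extension of `L` to that of `K`. -/
theorem stmt_19 (L K : Type*) [Lattice L] [BoundedOrder L]
    [Lattice K] [BoundedOrder K] (u : BoundedLatticeHom L K) :
    (∀ f : SPHsub K, (fun a : L => f.1 (u a)) ∈ SPHset L) ∧
    ∃ Du : SPHsub K → SPHsub L,
      (∀ f : SPHsub K, (Du f).1 = fun a : L => f.1 (u a)) ∧
      (∀ η ∈ MPE (ES L), (fun f : SPHsub K => η (Du f)) ∈ MPE (ES K)) ∧
      ∃ instL : CompleteLattice (CY L), ∃ instK : CompleteLattice (CY K),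
        (∀ φ ψ : CY L, instL.le φ ψ ↔ pre1 φ.1 ⊆ pre1 ψ.1) ∧
        (∀ φ ψ : CY K, instK.le φ ψ ↔ pre1 φ.1 ⊆ pre1 ψ.1) ∧
        ∃ G : CY L → CY K,
          (∀ η : CY L, (G η).1 = fun f : SPHsub K => η.1 (Du f)) ∧
          (∀ S : Set (CY L), G (instL.sInf S) = instK.sInf (G '' S)) ∧
          (∀ S : Set (CY L), G (instL.sSup S) = instK.sSup (G '' S)) := by
  classical
  refine ⟨fun f => Du_mem u f, Du u, fun _ => rfl, fun η hη => part_b u hη,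
    instCY, instCY, fun _ _ => Iff.rfl, fun _ _ => Iff.rfl,
    fun η => ⟨fun f => η.1 (Du u f), part_b u η.2⟩, fun _ => rfl, ?_, ?_⟩
  · intro S
    refine Subtype.ext (mpe_pre1_eq es_refl (Subtype.property _) (Subtype.property _) ?_)
    show Du u ⁻¹' pre1 (sInfC S).1 = pre1 (sInfC
      ((fun η : CY L => (⟨fun f : SPHsub K => η.1 (Du u f), part_b u η.2⟩ : CY K)) '' S)).1
    rw [pre1_sInfC, pre1_sInfC]
    ext f
    simp only [Set.mem_preimage, Set.mem_iInter]
    constructor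
    · rintro h ζ ⟨φ, hφ, rfl⟩
      exact h φ hφ
    · intro h φ hφ
      exact h _ ⟨φ, hφ, rfl⟩
  · intro S
    refine Subtype.ext (mpe_pre1_eq es_refl (Subtype.property _) (Subtype.property _) ?_)
    have hU : ∀ ψ ∈ (⋃ φ ∈ S, pre1 φ.1), ∀ χ : SPHsub L,
        pre1 ψ.1 ⊆ pre1 χ.1 → χ ∈ (⋃ φ ∈ S, pre1 φ.1) := by
      intro ψ hψ χ hsub
      obtain ⟨φ, hφ, hmem⟩ := Set.mem_iUnion₂.1 hψ
      exact Set.mem_biUnion hφ (mpe_up φ.2 hmem hsub)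
    have hset : Du u ⁻¹' (⋃ φ ∈ S, pre1 φ.1) = ⋃ ζ ∈
        ((fun η : CY L => (⟨fun f : SPHsub K => η.1 (Du u f), part_b u η.2⟩ : CY K)) '' S),
        pre1 ζ.1 := by
      ext f
      simp only [Set.mem_preimage, Set.mem_iUnion]
      constructor
      · rintro ⟨φ, hφ, hmem⟩
        exact ⟨_, ⟨φ, hφ, rfl⟩, hmem⟩
      · rintro ⟨ζ, ⟨φ, hφ, rfl⟩, hmem⟩
        exact ⟨φ, hφ, hmem⟩
    show Du u ⁻¹' pre1 (sSupC S).1 = pre1 (sSupC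
      ((fun η : CY L => (⟨fun f : SPHsub K => η.1 (Du u f), part_b u η.2⟩ : CY K)) '' S)).1
    rw [pre1_sSupC, pre1_sSupC, key1 u hU, hset]


end CanExt
end
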